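/- Let X be an n-dimensional Banach space and Y any Banach space (over the same scalar field ℝ or ℂ). Let T : X → Y be a bounded linear operator with ‖T‖ = 1 such that T attains its norm at n linearly independent unit vectors x₁, x₂, …, xₙ (i.e., ‖Txᵢ‖ = 1 for each i) and each Txᵢ is an extreme point of the closed unit ball of Y. Then T is an extreme point of the closed unit ball of the space L(X, Y) of bounded linear operators equipped with the operator norm. -/

import Mathlib

theorem stmt_4 {𝕜 : Type*} [RCLike 𝕜]
    {X Y : Type*} [NormedAddCommGroup X] [NormedSpace 𝕜 X] [CompleteSpace X]
    [NormedAddCommGroup Y] [NormedSpace 𝕜 Y] [CompleteSpace Y]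
    [NormedSpace ℝ Y] [IsScalarTower ℝ 𝕜 Y]
    [FiniteDimensional 𝕜 X] (n : ℕ) (hdim : Module.finrank 𝕜 X = n)
    (T : X →L[𝕜] Y) (hT : ‖T‖ = 1)
    (x : Fin n → X) (hli : LinearIndependent 𝕜 x)
    (hunit : ∀ i, ‖x i‖ = 1) (hattain : ∀ i, ‖T (x i)‖ = 1)
    (hext : ∀ i, T (x i) ∈ Set.extremePoints ℝ (Metric.closedBall (0 : Y) 1)) :
    T ∈ Set.extremePoints ℝ (Metric.closedBall (0 : X →L[𝕜] Y) 1) := by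
  rcases Nat.eq_zero_or_pos n with hn | hn
  · exfalso
    subst hn
    have hsub : Subsingleton X := by
      rw [← Module.finrank_zero_iff (R := 𝕜)] at *
      omega
    have : T = 0 := by
      ext v
      rw [Subsingleton.elim v 0]
      simp
    rw [this] at hT
    simp at hT
  haveI : Nonempty (Fin n) := Fin.pos_iff_nonempty.mp hn
  have hcard : Fintype.card (Fin n) = Module.finrank 𝕜 X := by simp [hdim]
  let b : Module.Basis (Fin n) 𝕜 X := basisOfLinearIndependentOfCardEqFinrank hli hcard
  have hb : ∀ i, b i = x i := fun i => by
    simp [b, coe_basisOfLinearIndependentOfCardEqFinrank]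
  constructor
  · simp only [Metric.mem_closedBall, dist_zero_right, hT, le_refl]
  · intro A hA B hB hmem
    obtain ⟨s, t, hs, ht, hst, hsum⟩ := hmem
    have hA' : ‖A‖ ≤ 1 := by simpa using hA
    have hB' : ‖B‖ ≤ 1 := by simpa using hB
    have key : ∀ i, A (x i) = T (x i) ∧ B (x i) = T (x i) := by
      intro i
      refine (mem_extremePoints.1 (hext i)).2 _ ?_ _ ?_ ?_
      · simp only [Metric.mem_closedBall, dist_zero_right]
        exact (A.le_opNorm _).trans (by simp [hunit i, hA'])
      · simp only [Metric.mem_closedBall, dist_zero_right]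
        exact (B.le_opNorm _).trans (by simp [hunit i, hB'])
      · exact ⟨s, t, hs, ht, hst, by rw [← hsum]; simp⟩
    have hAT : A = T := by
      apply ContinuousLinearMap.coe_injective
      apply Module.Basis.ext b
      intro i
      rw [hb i]
      exact (key i).1
    have hBT : B = T := by
      apply ContinuousLinearMap.coe_injective
      apply Module.Basis.ext b
      intro i
      rw [hb i]
      exact (key i).2
    exact hAT
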